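/- Let {X_n} be a decreasing sequence of nonempty compact subsets of ℂ (X_{n+1} ⊆ X_n), X = ∩ₙ X_n, and T a bounded operator on a complex Hilbert space. Then X is a spectral set for T if and only if every X_n is a spectral set for T. -/

import Mathlib

/-- `X ⊆ ℂ` is a spectral set for the operator `T`: `σ(T) ⊆ X` and
`‖f(T)‖ ≤ sup_{z ∈ X} |f(z)|` for every rational function `f = p/q` with poles off `X`. -/
def IsSpectralSetFor {H : Type*} [NormedAddCommGroup H] [InnerProductSpace ℂ H]
    [CompleteSpace H] (X : Set ℂ) (T : H →L[ℂ] H) : Prop :=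
  spectrum ℂ T ⊆ X ∧
    ∀ p q : Polynomial ℂ, (∀ z ∈ X, Polynomial.eval z q ≠ 0) →
      ‖Polynomial.aeval T p * Ring.inverse (Polynomial.aeval T q)‖
        ≤ sSup ((fun z => ‖Polynomial.eval z p / Polynomial.eval z q‖) '' X)

/-- For a decreasing sequence of nonempty compact sets `Xₙ ⊆ ℂ` with `X = ∩ₙ Xₙ` and a
bounded operator `T` on a complex Hilbert space, `X` is a spectral set for `T` iff every
`Xₙ` is a spectral set for `T`. -/
theorem stmt19 {H : Type*} [NormedAddCommGroup H] [InnerProductSpace ℂ H] [CompleteSpace H]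
    (T : H →L[ℂ] H) (X : ℕ → Set ℂ)
    (hcomp : ∀ n, IsCompact (X n)) (hne : ∀ n, (X n).Nonempty)
    (hdec : ∀ n, X (n + 1) ⊆ X n) :
    IsSpectralSetFor (⋂ n, X n) T ↔ ∀ n, IsSpectralSetFor (X n) T := by
  have hanti : Antitone X := antitone_nat_of_succ_le hdec
  have hclosed : ∀ n, IsClosed (X n) := fun n => (hcomp n).isClosed
  have hXne : (⋂ n, X n).Nonempty :=
    IsCompact.nonempty_iInter_of_sequence_nonempty_isCompact_isClosed X hdec hne (hcomp 0) hclosed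
  constructor
  · intro hX n
    refine ⟨hX.1.trans (Set.iInter_subset X n), ?_⟩
    intro p q hq
    have hq' : ∀ z ∈ ⋂ m, X m, Polynomial.eval z q ≠ 0 := fun z hz =>
      hq z (Set.iInter_subset X n hz)
    refine (hX.2 p q hq').trans ?_
    have hcont : ContinuousOn
        (fun z => ‖Polynomial.eval z p / Polynomial.eval z q‖) (X n) :=
      continuous_norm.comp_continuousOn
        ((p.continuous.continuousOn).div (q.continuous.continuousOn) hq)
    exact csSup_le_csSup ((hcomp n).bddAbove_image hcont) (hXne.image _)
      (Set.image_mono (Set.iInter_subset X n))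
  · intro h
    refine ⟨Set.subset_iInter fun n => (h n).1, ?_⟩
    intro p q hq
    have hqcl : IsClosed {z : ℂ | Polynomial.eval z q = 0} :=
      isClosed_eq q.continuous continuous_const
    obtain ⟨N, hN⟩ : ∃ N, ∀ z ∈ X N, Polynomial.eval z q ≠ 0 := by
      by_contra hcon
      push_neg at hcon
      set K : ℕ → Set ℂ := fun n => X n ∩ {z | Polynomial.eval z q = 0} with hK
      have hKne : ∀ n, (K n).Nonempty := fun n => by
        obtain ⟨z, hz, hz0⟩ := hcon n; exact ⟨z, hz, hz0⟩
      have : (⋂ n, K n).Nonempty :=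
        IsCompact.nonempty_iInter_of_sequence_nonempty_isCompact_isClosed K
          (fun n => Set.inter_subset_inter_left _ (hdec n)) hKne
          ((hcomp 0).inter_right hqcl) (fun n => (hclosed n).inter hqcl)
      obtain ⟨z, hz⟩ := this
      simp only [hK, Set.mem_iInter, Set.mem_inter_iff, Set.mem_setOf_eq] at hz
      exact hq z (Set.mem_iInter.2 fun n => (hz n).1) (hz 0).2
    set f : ℂ → ℝ := fun z => ‖Polynomial.eval z p / Polynomial.eval z q‖ with hf
    have hfc : ContinuousOn f (X N) :=
      continuous_norm.comp_continuousOn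
        ((p.continuous.continuousOn).div (q.continuous.continuousOn) hN)
    have hmax : ∀ n : ℕ, ∃ x ∈ X (N + n), sSup (f '' X (N + n)) = f x := fun n =>
      (hcomp (N + n)).exists_sSup_image_eq (hne (N + n))
        (hfc.mono (hanti (Nat.le_add_right N n)))
    choose u hu hu2 using hmax
    have huN : ∀ n, u n ∈ X N := fun n => hanti (Nat.le_add_right N n) (hu n)
    obtain ⟨x, hxN, φ, hφ, hlim⟩ := (hcomp N).tendsto_subseq huN
    have hxI : x ∈ ⋂ n, X n := by
      rw [Set.mem_iInter]
      intro m
      refine (hclosed m).mem_of_tendsto hlim ?_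
      filter_upwards [Filter.eventually_ge_atTop m] with k hk
      exact hanti (hk.trans (hφ.le_apply.trans (Nat.le_add_left _ N))) (hu (φ k))
    have hflim : Filter.Tendsto (fun k => f (u (φ k))) Filter.atTop (nhds (f x)) := by
      refine (hfc x hxN).tendsto.comp ?_
      rw [tendsto_nhdsWithin_iff]
      exact ⟨hlim, Filter.Eventually.of_forall fun k => huN (φ k)⟩
    have hbound : ∀ k, ‖Polynomial.aeval T p * Ring.inverse (Polynomial.aeval T q)‖
        ≤ f (u (φ k)) := fun k => by
      rw [← hu2 (φ k)]
      exact (h (N + φ k)).2 p q fun z hz => hN z (hanti (Nat.le_add_right N _) hz)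
    have hle : ‖Polynomial.aeval T p * Ring.inverse (Polynomial.aeval T q)‖ ≤ f x :=
      ge_of_tendsto hflim (Filter.Eventually.of_forall hbound)
    refine hle.trans (le_csSup ?_ ⟨x, hxI, rfl⟩)
    exact BddAbove.mono (Set.image_mono (f := f) (Set.iInter_subset X N))
      ((hcomp N).bddAbove_image hfc)
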